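/- Suppose β: [0,∞) → ℂ is differentiable and satisfies the ODE β' = iε(t)β + Y β^{N+1} conj(β)^N + r(t) with ε(t) real, Re Y = -κ < 0, and |r(t)| ≤ (κ/2)|β(t)|^{2N+1}. Then |β(t)|² satisfies d/dt |β|² ≤ -κ |β|^{2N+2}, and consequently |β(t)| ≤ (|β(0)|^{-2N} + κN t)^{-1/(2N)} ≤ C(1+t)^{-1/(2N)} for t ≥ 0, provided β(t) ≠ 0 for all t. -/

import Mathlib

open Complex

theorem stmt18 (N : ℕ) (hN : 1 ≤ N) (Y : ℂ) (κ : ℝ) (hκ : 0 < κ) (hY : Y.re = -κ)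
    (ε : ℝ → ℝ) (r : ℝ → ℂ) (β : ℝ → ℂ) (hβdiff : Differentiable ℝ β)
    (hr : ∀ t, 0 ≤ t → ‖r t‖ ≤ (κ / 2) * ‖β t‖ ^ (2 * N + 1))
    (hode : ∀ t, 0 ≤ t → deriv β t
      = Complex.I * (ε t : ℂ) * β t + Y * (β t) ^ (N + 1) * (starRingEnd ℂ (β t)) ^ N + r t)
    (hnz : ∀ t, 0 ≤ t → β t ≠ 0) :
    (∀ t, 0 ≤ t → deriv (fun s => ‖β s‖ ^ 2) t ≤ -κ * ‖β t‖ ^ (2 * N + 2))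
    ∧ (∀ t, 0 ≤ t →
        ‖β t‖ ≤ ((‖β 0‖ ^ (2 * N))⁻¹ + κ * N * t) ^ (-(1 : ℝ) / (2 * N)))
    ∧ (∃ Cb : ℝ, 0 < Cb ∧ ∀ t, 0 ≤ t →
        ‖β t‖ ≤ Cb * (1 + t) ^ (-(1 : ℝ) / (2 * N))) := by
  -- derivative of ‖β‖² at any point
  have hderivsq : ∀ t : ℝ, HasDerivAt (fun s => ‖β s‖ ^ 2)
      (2 * ((starRingEnd ℂ (β t)) * deriv β t).re) t := by
    intro t
    have hb : HasDerivAt β (deriv β t) t := (hβdiff t).hasDerivAt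
    have hre : HasDerivAt (fun s => (β s).re) ((deriv β t).re) t :=
      (Complex.reCLM.hasFDerivAt.comp_hasDerivAt t hb)
    have him : HasDerivAt (fun s => (β s).im) ((deriv β t).im) t :=
      (Complex.imCLM.hasFDerivAt.comp_hasDerivAt t hb)
    have h : HasDerivAt (fun s => (β s).re ^ 2 + (β s).im ^ 2)
        (2 * (β t).re ^ 1 * (deriv β t).re + 2 * (β t).im ^ 1 * (deriv β t).im) t :=
      ((hre.pow 2).add (him.pow 2))
    have heq : (fun s => ‖β s‖ ^ 2) = fun s => (β s).re ^ 2 + (β s).im ^ 2 := by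
      funext s
      rw [← Complex.normSq_eq_norm_sq, Complex.normSq_apply]; ring
    rw [heq]
    convert h using 1
    simp [Complex.mul_re]
    ring
  -- the key estimate for the real part
  have hkey : ∀ t, 0 ≤ t →
      2 * ((starRingEnd ℂ (β t)) * deriv β t).re ≤ -κ * ‖β t‖ ^ (2 * N + 2) := by
    intro t ht
    set z := β t with hz
    rw [hode t ht]
    have e1 : ((starRingEnd ℂ z) * (Complex.I * (ε t : ℂ) * z)).re = 0 := by
      have : (starRingEnd ℂ z) * (Complex.I * (ε t : ℂ) * z)
          = Complex.I * (ε t : ℂ) * (Complex.normSq z : ℂ) := by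
        rw [← Complex.mul_conj]; ring
      rw [this]; simp
    have e2 : ((starRingEnd ℂ z) * (Y * z ^ (N + 1) * (starRingEnd ℂ z) ^ N)).re
        = Y.re * ‖z‖ ^ (2 * N + 2) := by
      have h : (starRingEnd ℂ z) * (Y * z ^ (N + 1) * (starRingEnd ℂ z) ^ N)
          = Y * (((Complex.normSq z : ℝ) : ℂ)) ^ (N + 1) := by
        push_cast [← Complex.mul_conj]
        ring
      have h2 : (Complex.normSq z : ℝ) = ‖z‖ ^ 2 := by
        rw [Complex.normSq_eq_norm_sq]
      have h3 : (((Complex.normSq z : ℝ) : ℂ)) ^ (N + 1) = ((‖z‖ ^ (2 * N + 2) : ℝ) : ℂ) := by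
        rw [h2]; push_cast; rw [← pow_mul]; ring_nf
      rw [h, h3]
      simp [← Complex.ofReal_pow]
    have e3 : ((starRingEnd ℂ z) * r t).re ≤ (κ / 2) * ‖z‖ ^ (2 * N + 2) := by
      calc ((starRingEnd ℂ z) * r t).re ≤ ‖(starRingEnd ℂ z) * r t‖ := Complex.re_le_norm _
        _ = ‖z‖ * ‖r t‖ := by rw [norm_mul, Complex.norm_conj]
        _ ≤ ‖z‖ * ((κ / 2) * ‖z‖ ^ (2 * N + 1)) := by
            exact mul_le_mul_of_nonneg_left (hr t ht) (norm_nonneg _)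
        _ = (κ / 2) * ‖z‖ ^ (2 * N + 2) := by ring
    have : ((starRingEnd ℂ z) *
        (Complex.I * (ε t : ℂ) * z + Y * z ^ (N + 1) * (starRingEnd ℂ z) ^ N + r t)).re
        = ((starRingEnd ℂ z) * (Complex.I * (ε t : ℂ) * z)).re
          + ((starRingEnd ℂ z) * (Y * z ^ (N + 1) * (starRingEnd ℂ z) ^ N)).re
          + ((starRingEnd ℂ z) * r t).re := by
      rw [mul_add, mul_add, Complex.add_re, Complex.add_re]
    rw [this, e1, e2, hY]
    nlinarith [e3, pow_nonneg (norm_nonneg z) (2 * N + 2)]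
  have part1 : ∀ t, 0 ≤ t → deriv (fun s => ‖β s‖ ^ 2) t ≤ -κ * ‖β t‖ ^ (2 * N + 2) := by
    intro t ht
    rw [(hderivsq t).deriv]
    exact hkey t ht
  refine ⟨part1, ?_⟩
  -- setup for parts 2 and 3
  set u : ℝ → ℝ := fun s => ‖β s‖ ^ 2 with hu
  have hudiff : ∀ t, HasDerivAt u (2 * ((starRingEnd ℂ (β t)) * deriv β t).re) t := hderivsq
  have hupos : ∀ t, 0 ≤ t → 0 < u t := by
    intro t ht
    exact pow_pos (norm_pos_iff.mpr (hnz t ht)) 2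
  have hucont : Continuous u := hβdiff.continuous.norm.pow 2
  -- derivative bound in terms of u
  have hub : ∀ t, 0 ≤ t →
      2 * ((starRingEnd ℂ (β t)) * deriv β t).re ≤ -κ * (u t) ^ (N + 1) := by
    intro t ht
    have : (u t) ^ (N + 1) = ‖β t‖ ^ (2 * N + 2) := by
      rw [hu]; rw [← pow_mul]; ring_nf
    rw [this]
    exact hkey t ht
  -- v = (u^N)⁻¹, g = v - κ N t is monotone on [0,∞)
  set v : ℝ → ℝ := fun s => ((u s) ^ N)⁻¹ with hv
  set g : ℝ → ℝ := fun s => v s - κ * N * s with hg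
  have hmono : MonotoneOn g (Set.Ici (0 : ℝ)) := by
    apply monotoneOn_of_deriv_nonneg (convex_Ici 0)
    · apply ContinuousOn.sub
      · apply ContinuousOn.inv₀
        · exact (hucont.pow N).continuousOn
        · intro t ht
          exact pow_ne_zero N (ne_of_gt (hupos t ht))
      · exact (continuous_const.mul continuous_id).continuousOn
    · rw [interior_Ici]
      intro t ht
      have htpos : (0 : ℝ) < t := ht
      have hune : u t ≠ 0 := ne_of_gt (hupos t htpos.le)
      have hpow : HasDerivAt (fun s => (u s) ^ N)
          (N * (u t) ^ (N - 1) * (2 * ((starRingEnd ℂ (β t)) * deriv β t).re)) t :=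
        ((hudiff t).pow N)
      have hinv : HasDerivAt v
          (-(N * (u t) ^ (N - 1) * (2 * ((starRingEnd ℂ (β t)) * deriv β t).re))
            / ((u t) ^ N) ^ 2) t :=
        hpow.inv (pow_ne_zero N hune)
      exact (hinv.sub ((hasDerivAt_id t).const_mul (κ * N))).differentiableAt.differentiableWithinAt
    · rw [interior_Ici]
      intro t ht
      have htpos : (0 : ℝ) < t := ht
      have hupos' := hupos t htpos.le
      have hune : u t ≠ 0 := ne_of_gt hupos'
      have hpow : HasDerivAt (fun s => (u s) ^ N)
          (N * (u t) ^ (N - 1) * (2 * ((starRingEnd ℂ (β t)) * deriv β t).re)) t :=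
        ((hudiff t).pow N)
      have hinv : HasDerivAt v
          (-(N * (u t) ^ (N - 1) * (2 * ((starRingEnd ℂ (β t)) * deriv β t).re))
            / ((u t) ^ N) ^ 2) t :=
        hpow.inv (pow_ne_zero N hune)
      have hgd : HasDerivAt g
          (-(N * (u t) ^ (N - 1) * (2 * ((starRingEnd ℂ (β t)) * deriv β t).re))
            / ((u t) ^ N) ^ 2 - κ * N * 1) t := by
        exact hinv.sub ((hasDerivAt_id t).const_mul (κ * N))
      rw [hgd.deriv]
      have hd := hub t htpos.le
      -- need: κ N ≤ -(N u^{N-1} d)/(u^N)²  with d ≤ -κ u^{N+1}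
      have hNpos : (0 : ℝ) < N := by exact_mod_cast hN
      have hexp : (u t) ^ (N - 1) * (u t) ^ (N + 1) = ((u t) ^ N) ^ 2 := by
        have he : N - 1 + (N + 1) = N * 2 := by omega
        rw [← pow_add, he, pow_mul]
      have hnum : κ * N * ((u t) ^ N) ^ 2
          ≤ -(N * (u t) ^ (N - 1) * (2 * ((starRingEnd ℂ (β t)) * deriv β t).re)) := by
        have h1 : N * (u t) ^ (N - 1) * (2 * ((starRingEnd ℂ (β t)) * deriv β t).re)
            ≤ N * (u t) ^ (N - 1) * (-κ * (u t) ^ (N + 1)) := by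
          apply mul_le_mul_of_nonneg_left hd
          positivity
        have h2 : N * (u t) ^ (N - 1) * (-κ * (u t) ^ (N + 1))
            = -(κ * N * ((u t) ^ N) ^ 2) := by
          rw [← hexp]; ring
        linarith
      have hden : (0 : ℝ) < ((u t) ^ N) ^ 2 := by positivity
      rw [sub_nonneg, mul_one]
      rw [le_div_iff₀ hden]
      linarith
  -- conclude part 2
  have part2 : ∀ t, 0 ≤ t →
      ‖β t‖ ≤ ((‖β 0‖ ^ (2 * N))⁻¹ + κ * N * t) ^ (-(1 : ℝ) / (2 * N)) := by
    intro t ht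
    have hg0 : g 0 ≤ g t := hmono (Set.self_mem_Ici) ht ht
    have hv0 : v 0 = (‖β 0‖ ^ (2 * N))⁻¹ := by
      rw [hv, hu]
      simp only
      rw [← pow_mul]
    have hvt : v t = (‖β t‖ ^ (2 * N))⁻¹ := by
      rw [hv, hu]
      simp only
      rw [← pow_mul]
    have hA : (‖β 0‖ ^ (2 * N))⁻¹ + κ * N * t ≤ (‖β t‖ ^ (2 * N))⁻¹ := by
      have := hg0
      rw [hg] at this
      simp only at this
      rw [hv0] at this
      rw [hvt] at this
      linarith
    set A : ℝ := (‖β 0‖ ^ (2 * N))⁻¹ + κ * N * t with hAdef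
    have hbpos : 0 < ‖β t‖ := norm_pos_iff.mpr (hnz t ht)
    have hb0pos : 0 < ‖β 0‖ := norm_pos_iff.mpr (hnz 0 le_rfl)
    have hApos : 0 < A := by
      rw [hAdef]
      have : 0 < (‖β 0‖ ^ (2 * N))⁻¹ := by positivity
      have h2 : 0 ≤ κ * (N : ℝ) * t := by positivity
      linarith
    have hple : ‖β t‖ ^ (2 * N) ≤ A⁻¹ := by
      rw [← inv_inv (‖β t‖ ^ (2 * N))]
      exact inv_anti₀ hApos hA
    have h2Npos : (0 : ℝ) < 2 * N := by
      have : (0:ℝ) < N := by exact_mod_cast hN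
      linarith
    have key : ‖β t‖ = (‖β t‖ ^ (2 * N) : ℝ) ^ ((1 : ℝ) / (2 * N)) := by
      rw [← Real.rpow_natCast (‖β t‖) (2 * N), ← Real.rpow_mul hbpos.le]
      rw [show ((2 * N : ℕ) : ℝ) * ((1:ℝ) / (2 * N)) = 1 by
        push_cast; field_simp]
      simp
    rw [key]
    calc (‖β t‖ ^ (2 * N) : ℝ) ^ ((1 : ℝ) / (2 * N))
        ≤ (A⁻¹) ^ ((1 : ℝ) / (2 * N)) := by
          apply Real.rpow_le_rpow (by positivity) hple (by positivity)
      _ = A ^ (-(1 : ℝ) / (2 * N)) := by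
          rw [Real.inv_rpow hApos.le, ← Real.rpow_neg hApos.le, neg_div]
  refine ⟨part2, ?_⟩
  -- part 3
  have hb0pos : 0 < ‖β 0‖ := norm_pos_iff.mpr (hnz 0 le_rfl)
  have hNpos : (0 : ℝ) < N := by exact_mod_cast hN
  set c : ℝ := min ((‖β 0‖ ^ (2 * N))⁻¹) (κ * N) with hc
  have hcpos : 0 < c := lt_min (by positivity) (by positivity)
  refine ⟨c ^ (-(1 : ℝ) / (2 * N)), Real.rpow_pos_of_pos hcpos _, ?_⟩
  intro t ht
  have hA : c * (1 + t) ≤ (‖β 0‖ ^ (2 * N))⁻¹ + κ * N * t := by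
    have h1 : c ≤ (‖β 0‖ ^ (2 * N))⁻¹ := min_le_left _ _
    have h2 : c ≤ κ * N := min_le_right _ _
    nlinarith
  have h1t : (0 : ℝ) < 1 + t := by linarith
  have hexp : -(1 : ℝ) / (2 * N) ≤ 0 := by
    apply div_nonpos_of_nonpos_of_nonneg <;> [norm_num; positivity]
  calc ‖β t‖ ≤ ((‖β 0‖ ^ (2 * N))⁻¹ + κ * N * t) ^ (-(1 : ℝ) / (2 * N)) := part2 t ht
    _ ≤ (c * (1 + t)) ^ (-(1 : ℝ) / (2 * N)) := by
        apply Real.rpow_le_rpow_of_nonpos (by positivity) hA hexp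
    _ = c ^ (-(1 : ℝ) / (2 * N)) * (1 + t) ^ (-(1 : ℝ) / (2 * N)) := by
        rw [Real.mul_rpow hcpos.le h1t.le]
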